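/- If g_λ and g_{λ'} are two equivalent formal deformations of an n-Hom-Lie color algebra g generated by ω and ω' respectively, then ω − ω' is a 2-coboundary; in particular ω and ω' define the same class in the second cohomology group H²_{α,μ}(g,g) with adjoint coefficients. -/

import Mathlib

open scoped BigOperators

/-- The axioms of an `n`-Hom-Lie color algebra (arity `n = m+1`). -/
structure IsNHomLieColor (K : Type*) {Γ V : Type*} [Field K] [AddCommGroup Γ]
    [AddCommGroup V] [Module K V]
    (m : ℕ) (grading : Γ → Submodule K V) (ε : Γ → Γ → K)
    (bracket : MultilinearMap K (fun _ : Fin (m+1) => V) V) (α : V →ₗ[K] V) : Prop where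
  eps_ne_zero : ∀ a b, ε a b ≠ 0
  eps_symm : ∀ a b, ε a b * ε b a = 1
  eps_add_right : ∀ a b c, ε a (b + c) = ε a b * ε a c
  eps_add_left : ∀ a b c, ε (a + b) c = ε a c * ε b c
  alpha_deg : ∀ γ : Γ, ∀ v ∈ grading γ, α v ∈ grading γ
  bracket_deg : ∀ (d : Fin (m+1) → Γ) (x : Fin (m+1) → V),
      (∀ i, x i ∈ grading (d i)) → bracket x ∈ grading (∑ i, d i)
  skew : ∀ (d : Fin (m+1) → Γ) (x : Fin (m+1) → V), (∀ i, x i ∈ grading (d i)) →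
      ∀ i j : Fin (m+1), (i : ℕ) + 1 = (j : ℕ) →
      bracket x = -(ε (d i) (d j)) • bracket (x ∘ Equiv.swap i j)
  jacobi : ∀ (dx : Fin m → Γ) (dy : Fin (m+1) → Γ) (x : Fin m → V) (y : Fin (m+1) → V),
      (∀ i, x i ∈ grading (dx i)) → (∀ i, y i ∈ grading (dy i)) →
      bracket (Fin.snoc (fun i => α (x i)) (bracket y)) =
        ∑ i : Fin (m+1),
          ε (∑ j, dx j) (∑ j ∈ Finset.univ.filter (fun j => j < i), dy j) •
            bracket (Function.update (fun j => α (y j)) i (bracket (Fin.snoc x (y i))))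

/-- `ε a 0 = 1`. -/
lemma IsNHomLieColor.eps_zero_right {K Γ V : Type*} [Field K] [AddCommGroup Γ]
    [AddCommGroup V] [Module K V]
    {m : ℕ} {grading : Γ → Submodule K V} {ε : Γ → Γ → K}
    {bracket : MultilinearMap K (fun _ : Fin (m+1) => V) V} {α : V →ₗ[K] V}
    (h : IsNHomLieColor K m grading ε bracket α) (a : Γ) : ε a 0 = 1 := by
  have h1 := h.eps_add_right a 0 0
  rw [add_zero] at h1
  have h2 : ε a 0 * ε a 0 = ε a 0 * 1 := by rw [mul_one, ← h1]
  exact mul_left_cancel₀ (h.eps_ne_zero a 0) h2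

/-- Moving a homogeneous element from slot `i` to the last slot. -/
lemma IsNHomLieColor.move_to_end {K Γ V : Type*} [Field K] [AddCommGroup Γ]
    [AddCommGroup V] [Module K V]
    {m : ℕ} {grading : Γ → Submodule K V} {ε : Γ → Γ → K}
    {bracket : MultilinearMap K (fun _ : Fin (m+1) => V) V} {α : V →ₗ[K] V}
    (h : IsNHomLieColor K m grading ε bracket α) :
    ∀ (i : Fin (m+1)) (d : Fin (m+1) → Γ) (x : Fin (m+1) → V) (v : V),
      (∀ j, x j ∈ grading (d j)) → v ∈ grading (d i) →
      bracket (Function.update x i v) =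
        ((-1 : K) ^ (m - (i : ℕ)) *
          ε (d i) (∑ j ∈ Finset.univ.filter (fun j => i < j), d j)) •
          bracket (Fin.snoc (fun j => x (i.succAbove j)) v) := by
  refine Fin.reverseInduction ?_ ?_
  · -- base case `i = last`
    intro d x v hx hv
    have hemp : (Finset.univ.filter (fun j : Fin (m+1) => Fin.last m < j)) = ∅ := by
      apply Finset.filter_false_of_mem
      intro j _
      exact not_lt.2 (Fin.le_last j)
    have harg : Function.update x (Fin.last m) v =
        Fin.snoc (fun j => x ((Fin.last m).succAbove j)) v := by
      funext k
      refine Fin.lastCases ?_ ?_ k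
      · simp
      · intro j
        rw [Fin.snoc_castSucc, Fin.succAbove_last,
          Function.update_of_ne (Fin.castSucc_lt_last j).ne]
    rw [harg, hemp, Finset.sum_empty, h.eps_zero_right, Fin.val_last,
      Nat.sub_self, pow_zero, one_mul, one_smul]
  · -- inductive step: from `i.succ` to `i.castSucc`
    intro i IH d x v hx hv
    have hne : i.castSucc ≠ i.succ := ((Fin.castSucc_lt_succ : i.castSucc < i.succ)).ne
    have hd' : ∀ j, Function.update x i.castSucc v j ∈ grading (d j) := by
      intro j
      rcases eq_or_ne j i.castSucc with rfl | hj
      · simpa using hv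
      · rw [Function.update_of_ne hj]; exact hx j
    have hskew := h.skew d (Function.update x i.castSucc v) hd' i.castSucc i.succ
      (by simp)
    have hcomp : (Function.update x i.castSucc v) ∘ (Equiv.swap i.castSucc i.succ) =
        Function.update (x ∘ Equiv.swap i.castSucc i.succ) i.succ v := by
      funext k
      simp only [Function.comp_apply]
      rcases eq_or_ne k i.succ with rfl | hk1
      · rw [Function.update_self, Equiv.swap_apply_right, Function.update_self]
      rcases eq_or_ne k i.castSucc with rfl | hk2
      · rw [Function.update_of_ne hk1, Equiv.swap_apply_left,
          Function.update_of_ne hne.symm]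
        simp [Equiv.swap_apply_left]
      · rw [Function.update_of_ne hk1, Equiv.swap_apply_of_ne_of_ne hk2 hk1,
          Function.update_of_ne hk2]
        simp [Equiv.swap_apply_of_ne_of_ne hk2 hk1]
    have hx' : ∀ j, (x ∘ Equiv.swap i.castSucc i.succ) j ∈
        grading ((d ∘ Equiv.swap i.castSucc i.succ) j) := fun j => hx _
    have hv' : v ∈ grading ((d ∘ Equiv.swap i.castSucc i.succ) i.succ) := by
      simpa [Equiv.swap_apply_right] using hv
    have hIH := IH (d ∘ Equiv.swap i.castSucc i.succ) (x ∘ Equiv.swap i.castSucc i.succ)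
      v hx' hv'
    rw [hskew, hcomp, hIH]
    -- identify the snoc arguments
    have hargs : (fun j => (x ∘ Equiv.swap i.castSucc i.succ) (i.succ.succAbove j)) =
        fun j => x (i.castSucc.succAbove j) := by
      funext j
      rcases lt_trichotomy (j : ℕ) (i : ℕ) with hj | hj | hj
      · have h1 : j.castSucc < i.castSucc := by
          simp only [Fin.lt_def, Fin.coe_castSucc]; omega
        have h2 : j.castSucc < i.succ := by
          simp only [Fin.lt_def, Fin.coe_castSucc, Fin.val_succ]; omega
        have h3 : j.castSucc ≠ i.succ := by
          simp only [ne_eq, Fin.ext_iff, Fin.coe_castSucc, Fin.val_succ]; omega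
        rw [Fin.succAbove_of_castSucc_lt _ _ h2, Fin.succAbove_of_castSucc_lt _ _ h1]
        simp only [Function.comp_apply]
        rw [Equiv.swap_apply_of_ne_of_ne h1.ne h3]
      · have h1 : j.castSucc < i.succ := by
          simp only [Fin.lt_def, Fin.coe_castSucc, Fin.val_succ]; omega
        have h2 : i.castSucc ≤ j.castSucc := by
          simp only [Fin.le_def, Fin.coe_castSucc]; omega
        have h3 : j.castSucc = i.castSucc := by
          simp only [Fin.ext_iff, Fin.coe_castSucc]; omega
        rw [Fin.succAbove_of_castSucc_lt _ _ h1, Fin.succAbove_of_le_castSucc _ _ h2]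
        simp only [Function.comp_apply, h3, Equiv.swap_apply_left]
        congr 1
        simp only [Fin.ext_iff, Fin.val_succ]; omega
      · have h1 : i.succ ≤ j.castSucc := by
          simp only [Fin.le_def, Fin.coe_castSucc, Fin.val_succ]; omega
        have h2 : i.castSucc ≤ j.castSucc := by
          simp only [Fin.le_def, Fin.coe_castSucc]; omega
        have h3 : j.succ ≠ i.castSucc := by
          simp only [ne_eq, Fin.ext_iff, Fin.coe_castSucc, Fin.val_succ]; omega
        have h4 : j.succ ≠ i.succ := by
          simp only [ne_eq, Fin.ext_iff, Fin.val_succ]; omega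
        rw [Fin.succAbove_of_le_castSucc _ _ h1, Fin.succAbove_of_le_castSucc _ _ h2]
        simp only [Function.comp_apply]
        rw [Equiv.swap_apply_of_ne_of_ne h3 h4]
    rw [hargs]
    -- now a scalar computation
    rw [smul_smul]
    congr 1
    have hdsucc : (d ∘ Equiv.swap i.castSucc i.succ) i.succ = d i.castSucc := by
      simp [Equiv.swap_apply_right]
    have hsum' : ∑ j ∈ Finset.univ.filter (fun j => i.succ < j),
        (d ∘ Equiv.swap i.castSucc i.succ) j =
        ∑ j ∈ Finset.univ.filter (fun j => i.succ < j), d j := by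
      refine Finset.sum_congr rfl ?_
      intro j hj
      rw [Finset.mem_filter] at hj
      have h1 : j ≠ i.castSucc := by
        have := hj.2
        simp [Fin.lt_def] at this ⊢
        intro hcon
        simp [Fin.ext_iff] at hcon
        omega
      have h2 : j ≠ i.succ := (hj.2).ne'
      simp only [Function.comp_apply]
      rw [Equiv.swap_apply_of_ne_of_ne h1 h2]
    have hfil : Finset.univ.filter (fun j : Fin (m+1) => i.castSucc < j) =
        insert i.succ (Finset.univ.filter (fun j : Fin (m+1) => i.succ < j)) := by
      ext j
      simp only [Finset.mem_filter, Finset.mem_insert, Finset.mem_univ, true_and]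
      constructor
      · intro hj
        rcases eq_or_lt_of_le (Fin.castSucc_lt_iff_succ_le.1 hj) with hh | hh
        · exact Or.inl hh.symm
        · exact Or.inr hh
      · intro hj
        rcases hj with rfl | hj
        · exact (Fin.castSucc_lt_succ : i.castSucc < i.succ)
        · exact lt_trans ((Fin.castSucc_lt_succ : i.castSucc < i.succ)) hj
    have hnotmem : i.succ ∉ Finset.univ.filter (fun j : Fin (m+1) => i.succ < j) := by
      simp
    rw [hdsucc, hsum', hfil, Finset.sum_insert hnotmem, h.eps_add_right]
    have hpow : (m - (i.castSucc : ℕ)) = (m - (i.succ : ℕ)) + 1 := by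
      have := i.isLt
      simp only [Fin.coe_castSucc, Fin.val_succ]
      omega
    rw [hpow, pow_succ]
    ring

/-- If two formal deformations of an `n`-Hom-Lie color algebra generated by `ω`
and `ω'` are equivalent via a formal isomorphism `φ_λ = Σ φᵢ λⁱ`, then
`ω − ω'` is a `2`-coboundary (namely `δ¹φ₁`); in particular `ω` and `ω'` define
the same second cohomology class with adjoint coefficients. -/
theorem equivalent_deformations_cohomologous
    {K Γ V : Type*} [Field K] [AddCommGroup Γ] [AddCommGroup V] [Module K V]
    (m : ℕ) (grading : Γ → Submodule K V) (ε : Γ → Γ → K)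
    (bracket : MultilinearMap K (fun _ : Fin (m+1) => V) V) (α : V →ₗ[K] V)
    (h : IsNHomLieColor K m grading ε bracket α)
    -- the two deformations, with coefficients `ω i`, `ω' i` and `ω₀ = ω'₀ = [·,…,·]`
    (ω ω' : ℕ → MultilinearMap K (fun _ : Fin (m+1) => V) V)
    (hω0 : ω 0 = bracket) (hω'0 : ω' 0 = bracket)
    (hωdeg : ∀ i (d : Fin (m+1) → Γ) (x : Fin (m+1) → V),
      (∀ j, x j ∈ grading (d j)) → ω i x ∈ grading (∑ j, d j))
    (hω'deg : ∀ i (d : Fin (m+1) → Γ) (x : Fin (m+1) → V),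
      (∀ j, x j ∈ grading (d j)) → ω' i x ∈ grading (∑ j, d j))
    -- the formal isomorphism `φ_λ = Σᵢ φᵢ λⁱ`, `φ₀ = id`, of degree zero,
    -- commuting with `α`
    (φ : ℕ → (V →ₗ[K] V)) (hφ0 : φ 0 = LinearMap.id)
    (hφdeg : ∀ i (γ : Γ), ∀ v ∈ grading γ, φ i v ∈ grading γ)
    (hφα : ∀ i, φ i ∘ₗ α = α ∘ₗ φ i)
    -- equivalence: `φ_λ ∘ [·,…,·]_λ = [·,…,·]'_{λ} ∘ φ_λ⊗…⊗φ_λ`, coefficientwise in `λ`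
    (hequiv : ∀ (l : ℕ) (x : Fin (m+1) → V),
      ∑ i ∈ Finset.range (l + 1), φ i (ω (l - i) x) =
        ∑ e ∈ Finset.Nat.antidiagonalTuple (m + 2) l,
          ω' (e (Fin.last (m+1))) (fun j => φ (e j.castSucc) (x j))) :
    -- then `ω₁ − ω'₁ = δ¹φ₁` is a `2`-coboundary
    ∀ (d : Fin (m+1) → Γ) (x : Fin (m+1) → V), (∀ i, x i ∈ grading (d i)) →
      ω 1 x - ω' 1 x =
        ∑ i : Fin (m+1),
          ((-1 : K) ^ (m - (i : ℕ)) *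
            ε (d i) (∑ j ∈ Finset.univ.filter (fun j => i < j), d j)) •
            bracket (Fin.snoc (fun j => x (i.succAbove j)) (φ 1 (x i))) -
        φ 1 (bracket x) := by
  intro d x hx
  have H := hequiv 1 x
  rw [Finset.sum_range_succ, Finset.sum_range_succ, Finset.sum_range_zero, zero_add] at H
  simp only [Nat.sub_zero, Nat.sub_self, hφ0, hω0, LinearMap.id_coe, id_eq] at H
  -- identify the antidiagonal tuples of sum 1
  have hset : Finset.Nat.antidiagonalTuple (m+2) 1 =
      Finset.image (fun j : Fin (m+2) => Pi.single j 1) Finset.univ := by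
    ext e
    simp only [Finset.Nat.mem_antidiagonalTuple, Finset.mem_image, Finset.mem_univ,
      true_and]
    constructor
    · intro he
      have hex : ∃ j, e j ≠ 0 := by
        by_contra hcon
        push_neg at hcon
        rw [Finset.sum_eq_zero (fun j _ => hcon j)] at he
        exact one_ne_zero he.symm
      obtain ⟨j, hj⟩ := hex
      have hle : e j ≤ 1 := he ▸ Finset.single_le_sum (fun k _ => Nat.zero_le _)
        (Finset.mem_univ j)
      have hej : e j = 1 := le_antisymm hle (Nat.one_le_iff_ne_zero.2 hj)
      have hrest : ∑ k ∈ Finset.univ.erase j, e k = 0 := by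
        have := Finset.add_sum_erase Finset.univ e (Finset.mem_univ j)
        omega
      refine ⟨j, funext fun k => ?_⟩
      rcases eq_or_ne k j with rfl | hk
      · simp [hej]
      · rw [Pi.single_eq_of_ne hk]
        exact (Finset.sum_eq_zero_iff.1 hrest k (Finset.mem_erase.2
          ⟨hk, Finset.mem_univ k⟩)).symm
    · rintro ⟨j, rfl⟩
      simp [Pi.single_apply]
  have hinj : ∀ a ∈ (Finset.univ : Finset (Fin (m+2))), ∀ b ∈ Finset.univ,
      (Pi.single a 1 : Fin (m+2) → ℕ) = Pi.single b 1 → a = b := by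
    intro a _ b _ hab
    by_contra hne
    have := congrFun hab a
    rw [Pi.single_eq_same, Pi.single_eq_of_ne hne] at this
    exact one_ne_zero this
  rw [hset, Finset.sum_image hinj, Fin.sum_univ_castSucc] at H
  -- the last-index term
  have hlast : (ω' ((Pi.single (Fin.last (m+1)) 1 : Fin (m+2) → ℕ) (Fin.last (m+1)))
      fun j => φ ((Pi.single (Fin.last (m+1)) 1 : Fin (m+2) → ℕ) j.castSucc) (x j)) = ω' 1 x := by
    rw [Pi.single_eq_same]
    congr 1
    funext j
    rw [Pi.single_eq_of_ne (Fin.castSucc_lt_last j).ne, hφ0]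
    rfl
  -- the other terms
  have hterm : ∀ i : Fin (m+1),
      (ω' ((Pi.single i.castSucc 1 : Fin (m+2) → ℕ) (Fin.last (m+1)))
        fun j => φ ((Pi.single i.castSucc 1 : Fin (m+2) → ℕ) j.castSucc) (x j)) =
      ((-1 : K) ^ (m - (i : ℕ)) *
        ε (d i) (∑ j ∈ Finset.univ.filter (fun j => i < j), d j)) •
        bracket (Fin.snoc (fun j => x (i.succAbove j)) (φ 1 (x i))) := by
    intro i
    rw [Pi.single_eq_of_ne (Fin.castSucc_lt_last i).ne', hω'0]
    have harg : (fun j => φ ((Pi.single i.castSucc 1 : Fin (m+2) → ℕ) j.castSucc) (x j)) =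
        Function.update x i (φ 1 (x i)) := by
      funext j
      rcases eq_or_ne j i with rfl | hj
      · rw [Pi.single_eq_same, Function.update_self]
      · rw [Pi.single_eq_of_ne (fun hc => hj (Fin.castSucc_injective _ hc)), hφ0,
          Function.update_of_ne hj]
        rfl
    rw [harg]
    exact h.move_to_end i d x (φ 1 (x i)) hx (hφdeg 1 (d i) (x i) (hx i))
  rw [hlast, Finset.sum_congr rfl (fun i _ => hterm i)] at H
  rw [sub_eq_sub_iff_add_eq_add]
  exact H
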